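/- arXiv:1812.05137 — 4 statements merged into one kernel-verified Lean document; each statement's English description precedes it below -/
import Mathlib

section
/- For every b > 0 and every t with 0 < t ≤ T, the integral ∫₀ᵗ (1/v) e^{-b/v} dv is at most |ln(T/b)| + 1. -/
open MeasureTheory Real

lemma aux_f_meas (b : ℝ) : Measurable (fun v : ℝ => (1 / v) * Real.exp (-b / v)) := by
  fun_prop

lemma aux_f_nonneg (b : ℝ) (v : ℝ) (hv : 0 < v) : 0 ≤ (1 / v) * Real.exp (-b / v) := by
  positivity

lemma aux_f_le (b : ℝ) (hb : 0 < b) (v : ℝ) (hv : 0 < v) :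
    (1 / v) * Real.exp (-b / v) ≤ 1 / b := by
  rw [neg_div, Real.exp_neg]
  have hE := Real.exp_pos (b / v)
  have heq : (1 / v) * (Real.exp (b / v))⁻¹ = 1 / (v * Real.exp (b / v)) := by
    field_simp
  rw [heq, div_le_div_iff₀ (by positivity) hb]
  have hmul : b / v * v = b := div_mul_cancel₀ b hv.ne'
  nlinarith [mul_le_mul_of_nonneg_right (Real.add_one_le_exp (b / v)) hv.le]

lemma aux_integrable (b s : ℝ) (hb : 0 < b) :
    IntegrableOn (fun v : ℝ => (1 / v) * Real.exp (-b / v)) (Set.Ioc 0 s) := by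
  apply Integrable.mono' (integrable_const (1 / b)) ((aux_f_meas b).aestronglyMeasurable)
  filter_upwards [ae_restrict_mem measurableSet_Ioc] with v hv
  rw [Real.norm_eq_abs, abs_of_nonneg (aux_f_nonneg b v hv.1)]
  exact aux_f_le b hb v hv.1

lemma aux_le_one (b s : ℝ) (hb : 0 < b) (hs : s ≤ b) :
    ∫ v in Set.Ioc (0:ℝ) s, (1 / v) * Real.exp (-b / v) ≤ 1 := by
  rcases le_or_gt s 0 with h | h
  · rw [Set.Ioc_eq_empty (by linarith)]
    simp
  calc ∫ v in Set.Ioc (0:ℝ) s, (1 / v) * Real.exp (-b / v)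
      ≤ ∫ _ in Set.Ioc (0:ℝ) s, (1 / b) := by
        apply setIntegral_mono_on (aux_integrable b s hb) (integrable_const _)
          measurableSet_Ioc
        intro v hv; exact aux_f_le b hb v hv.1
    _ = s * (1 / b) := by
        rw [setIntegral_const, Real.volume_real_Ioc_of_le (by linarith), smul_eq_mul]
        ring_nf
    _ ≤ 1 := by rw [mul_one_div]; exact (div_le_one hb).mpr hs

/-- For every `b > 0` and every `t` with `0 < t ≤ T`,
`∫₀ᵗ (1/v) e^{-b/v} dv ≤ |ln(T/b)| + 1`. -/
theorem integral_inv_mul_exp_neg_div_le (T : ℝ) (hT : 0 < T) :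
    ∀ b t : ℝ, 0 < b → 0 < t → t ≤ T →
      ∫ v in Set.Ioc (0:ℝ) t, (1 / v) * Real.exp (-b / v) ≤ |Real.log (T / b)| + 1 := by
  intro b t hb ht htT
  have habs : (0:ℝ) ≤ |Real.log (T / b)| := abs_nonneg _
  rcases le_or_gt t b with hcase | hcase
  · linarith [aux_le_one b t hb hcase]
  · -- split at b
    have hsplit : Set.Ioc (0:ℝ) t = Set.Ioc 0 b ∪ Set.Ioc b t :=
      (Set.Ioc_union_Ioc_eq_Ioc hb.le hcase.le).symm
    have hi1 : IntegrableOn (fun v : ℝ => (1 / v) * Real.exp (-b / v)) (Set.Ioc 0 b) :=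
      aux_integrable b b hb
    have hi2 : IntegrableOn (fun v : ℝ => (1 / v) * Real.exp (-b / v)) (Set.Ioc b t) :=
      (aux_integrable b t hb).mono_set (Set.Ioc_subset_Ioc_left hb.le)
    rw [hsplit, setIntegral_union (Set.Ioc_disjoint_Ioc_of_le le_rfl) measurableSet_Ioc hi1 hi2]
    have h1 : ∫ v in Set.Ioc (0:ℝ) b, (1 / v) * Real.exp (-b / v) ≤ 1 :=
      aux_le_one b b hb le_rfl
    have h2 : ∫ v in Set.Ioc b t, (1 / v) * Real.exp (-b / v) ≤ |Real.log (T / b)| := by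
      have hc : ContinuousOn (fun v : ℝ => 1 / v) (Set.Icc b t) := by
        apply ContinuousOn.div continuousOn_const continuousOn_id
        intro x hx; exact ne_of_gt (hb.trans_le hx.1)
      have hint1v : IntegrableOn (fun v : ℝ => 1 / v) (Set.Ioc b t) :=
        (hc.integrableOn_Icc).mono_set Set.Ioc_subset_Icc_self
      calc ∫ v in Set.Ioc b t, (1 / v) * Real.exp (-b / v)
          ≤ ∫ v in Set.Ioc b t, 1 / v := by
            apply setIntegral_mono_on hi2 hint1v measurableSet_Ioc
            intro v hv
            have hv0 : (0:ℝ) < v := lt_trans hb hv.1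
            have hexp : Real.exp (-b / v) ≤ 1 := by
              apply Real.exp_le_one_iff.mpr
              rw [neg_div]
              exact neg_nonpos.mpr (by positivity)
            nlinarith [one_div_pos.mpr hv0]
        _ = Real.log (t / b) := by
            rw [← intervalIntegral.integral_of_le hcase.le,
              integral_one_div_of_pos hb (lt_trans hb hcase)]
        _ ≤ Real.log (T / b) := by
            apply Real.log_le_log (by positivity)
            gcongr
        _ ≤ |Real.log (T / b)| := le_abs_self _
    linarith
end

section
/- Let h : ℝ₊ × ℝ^d → ℝ and h̄ : ℝ^d → ℝ be measurable functions such that H(r,y) = h(r,y) - h̄(y) is bounded and G(r,y) = ∫₀ʳ (h(v,y) - h̄(y)) dv is bounded. Then sup over y ∈ ℝ^d, D > 0, ε > 0, t ∈ (0,T] of |(1/√ε) ∫₀ᵗ (e^{-D/(t-s)}/√(t-s)) (h(s/ε, y) - h̄(y)) ds| is finite. -/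
open MeasureTheory Real intervalIntegral

namespace AveragingAux

lemma one_div_sqrt_eq_rpow {u : ℝ} (hu : 0 ≤ u) :
    1 / Real.sqrt u = u ^ (-(1/2) : ℝ) := by
  rw [one_div, Real.sqrt_eq_rpow, ← Real.rpow_neg hu]

lemma intervalIntegrable_one_div_sqrt_sub {t a b : ℝ} (hab : a ≤ b) (hbt : b ≤ t) :
    IntervalIntegrable (fun s => 1 / Real.sqrt (t - s)) volume a b := by
  have h1 : IntervalIntegrable (fun u : ℝ => u ^ (-(1/2) : ℝ)) volume (t - b) (t - a) :=
    intervalIntegrable_rpow' (by norm_num)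
  have h2 : IntervalIntegrable (fun x : ℝ => (t - x) ^ (-(1/2) : ℝ)) volume b a := by
    simpa using h1.comp_sub_left t
  refine h2.symm.mono_fun ?_ ?_
  · refine Measurable.aestronglyMeasurable ?_
    have : Measurable fun s : ℝ => Real.sqrt (t - s) :=
      Real.continuous_sqrt.measurable.comp (measurable_const.sub measurable_id)
    simpa [one_div] using this
  · filter_upwards [ae_restrict_mem measurableSet_uIoc] with s hs
    rw [Set.uIoc_of_le hab] at hs
    have hts : 0 ≤ t - s := by linarith [hs.2]
    rw [Real.norm_eq_abs, Real.norm_eq_abs, one_div_sqrt_eq_rpow hts]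

lemma integral_one_div_sqrt_sub {t a b : ℝ} (hab : a ≤ b) (hbt : b ≤ t) :
    ∫ s in a..b, 1 / Real.sqrt (t - s)
      = 2 * Real.sqrt (t - a) - 2 * Real.sqrt (t - b) := by
  have h0 : (∫ s in a..b, 1 / Real.sqrt (t - s))
      = ∫ u in (t-b)..(t-a), 1 / Real.sqrt u :=
    intervalIntegral.integral_comp_sub_left (fun u => 1 / Real.sqrt u) t
  have hba : t - b ≤ t - a := by linarith
  have h1 : (∫ u in (t-b)..(t-a), 1 / Real.sqrt u)
      = ∫ u in (t-b)..(t-a), u ^ (-(1/2) : ℝ) := by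
    apply intervalIntegral.integral_congr
    intro u hu
    rw [Set.uIcc_of_le hba] at hu
    exact one_div_sqrt_eq_rpow (le_trans (by linarith : (0:ℝ) ≤ t - b) hu.1)
  rw [h0, h1, integral_rpow (Or.inl (by norm_num))]
  rw [Real.sqrt_eq_rpow, Real.sqrt_eq_rpow]
  norm_num
  ring


lemma kernel_nonneg (D t s : ℝ) : 0 ≤ Real.exp (-D/(t-s)) / Real.sqrt (t-s) :=
  div_nonneg (Real.exp_pos _).le (Real.sqrt_nonneg _)

lemma kernel_le {D t s : ℝ} (hD : 0 < D) (hst : s ≤ t) :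
    Real.exp (-D/(t-s)) / Real.sqrt (t-s) ≤ 1 / Real.sqrt (t-s) := by
  rcases eq_or_lt_of_le hst with h0 | h0
  · simp [h0]
  · have hu : 0 < t - s := by linarith
    have hexp : Real.exp (-D/(t-s)) ≤ 1 := by
      rw [Real.exp_le_one_iff]
      rw [neg_div]
      exact neg_nonpos.2 (div_nonneg hD.le hu.le)
    gcongr

lemma kernel_pointwise_bound {D t s CH : ℝ} (hD : 0 < D) (hst : s ≤ t) {f : ℝ → ℝ}
    (hfs : |f s| ≤ CH) :
    ‖(Real.exp (-D/(t-s)) / Real.sqrt (t-s)) * f s‖ ≤ CH * (1 / Real.sqrt (t-s)) := by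
  have hCH : 0 ≤ CH := le_trans (abs_nonneg _) hfs
  rw [Real.norm_eq_abs, abs_mul, abs_of_nonneg (kernel_nonneg D t s), mul_comm]
  exact mul_le_mul hfs (kernel_le hD hst) (kernel_nonneg D t s) hCH

lemma kernel_mul_measurable {D t : ℝ} {f : ℝ → ℝ} (hfm : Measurable f) :
    Measurable (fun s => (Real.exp (-D/(t-s)) / Real.sqrt (t-s)) * f s) := by
  have hm1 : Measurable fun s : ℝ => t - s := measurable_const.sub measurable_id
  have hsq : Measurable fun s : ℝ => Real.sqrt (t - s) :=
    Real.continuous_sqrt.measurable.comp hm1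
  exact (((measurable_const.div hm1).exp).div hsq).mul hfm

lemma tail_bound {D t a CH : ℝ} (hD : 0 < D) (ha : 0 ≤ a) (hat : a ≤ t) {f : ℝ → ℝ}
    (hfb : ∀ s, 0 ≤ s → |f s| ≤ CH) :
    |∫ s in a..t, (Real.exp (-D/(t-s)) / Real.sqrt (t-s)) * f s|
      ≤ CH * (2 * Real.sqrt (t - a)) := by
  have hCH : 0 ≤ CH := le_trans (abs_nonneg _) (hfb 0 le_rfl)
  have hg : IntervalIntegrable (fun s => CH * (1 / Real.sqrt (t - s))) volume a t :=
    (intervalIntegrable_one_div_sqrt_sub hat le_rfl).const_mul CH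
  have key := intervalIntegral.norm_integral_le_abs_of_norm_le (μ := volume)
    (f := fun s => (Real.exp (-D/(t-s)) / Real.sqrt (t-s)) * f s)
    (g := fun s => CH * (1 / Real.sqrt (t - s))) ?_ hg
  · rw [Real.norm_eq_abs] at key
    refine key.trans ?_
    rw [intervalIntegral.integral_const_mul, integral_one_div_sqrt_sub hat le_rfl]
    simp only [sub_self, Real.sqrt_zero, mul_zero, sub_zero]
    rw [abs_of_nonneg (by positivity)]
  · filter_upwards [ae_restrict_mem measurableSet_uIoc] with s hs
    rw [Set.uIoc_of_le hat] at hs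
    exact kernel_pointwise_bound hD hs.2 (hfb s (le_trans ha hs.1.le))

lemma kernel_mul_intervalIntegrable {D t a b CH : ℝ} (hD : 0 < D) (ha : 0 ≤ a)
    (hab : a ≤ b) (hbt : b ≤ t) {f : ℝ → ℝ} (hfm : Measurable f)
    (hfb : ∀ s, 0 ≤ s → |f s| ≤ CH) :
    IntervalIntegrable (fun s => (Real.exp (-D/(t-s)) / Real.sqrt (t-s)) * f s)
      volume a b := by
  refine ((intervalIntegrable_one_div_sqrt_sub hab hbt).const_mul CH).mono_fun'
    ((kernel_mul_measurable hfm).aestronglyMeasurable) ?_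
  filter_upwards [ae_restrict_mem measurableSet_uIoc] with s hs
  rw [Set.uIoc_of_le hab] at hs
  exact kernel_pointwise_bound hD (hs.2.trans hbt) (hfb s (le_trans ha hs.1.le))


lemma kernel_hasDerivAt {D t s : ℝ} (hst : s < t) :
    HasDerivAt (fun s => Real.exp (-D/(t-s)) / Real.sqrt (t-s))
      (Real.exp (-D/(t-s)) * ((1/2 - D/(t-s)) / ((t-s) * Real.sqrt (t-s)))) s := by
  have hu : 0 < t - s := sub_pos.2 hst
  have hu0 : t - s ≠ 0 := hu.ne'
  have hsq : Real.sqrt (t - s) ≠ 0 := (Real.sqrt_pos.2 hu).ne'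
  have h1 : HasDerivAt (fun x : ℝ => t - x) (-1) s := (hasDerivAt_id s).const_sub t
  have h2' : HasDerivAt (fun x : ℝ => (t - x)⁻¹) (-(-1) / (t-s)^2) s := h1.inv hu0
  have h2 : HasDerivAt (fun x : ℝ => -D / (t - x)) (-D * (-(-1) / (t-s)^2)) s := by
    simpa only [div_eq_mul_inv] using h2'.const_mul (-D)
  have h3 := h2.exp
  have h4 : HasDerivAt (fun x : ℝ => Real.sqrt (t - x)) (-1 / (2 * Real.sqrt (t - s))) s :=
    h1.sqrt hu0
  have h5 := h3.div h4 hsq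
  refine h5.congr_deriv ?_
  have key : ∀ e u q : ℝ, u ≠ 0 → q ≠ 0 → q*q = u →
      e * ((1/2 - D/u) / (u*q)) = (e * (-D * (- -1 / u^2)) * q - e * (-1/(2*q))) / q^2 := by
    intro e u q hu hq h
    field_simp
    linear_combination (e*u) * h
  exact (key _ _ _ hu0 hsq (Real.mul_self_sqrt hu.le)).symm

lemma psi_hasDerivAt {t r : ℝ} (hrt : r < t) :
    HasDerivAt (fun r => 3 / Real.sqrt (t - r))
      ((3/2) / ((t-r) * Real.sqrt (t-r))) r := by
  have hu : 0 < t - r := sub_pos.2 hrt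
  have hsq : Real.sqrt (t - r) ≠ 0 := (Real.sqrt_pos.2 hu).ne'
  have h1 : HasDerivAt (fun x : ℝ => t - x) (-1) r := (hasDerivAt_id r).const_sub t
  have h4 : HasDerivAt (fun x : ℝ => Real.sqrt (t - x)) (-1 / (2 * Real.sqrt (t - r))) r :=
    h1.sqrt hu.ne'
  have h5 := (hasDerivAt_const r (3:ℝ)).div h4 hsq
  refine h5.congr_deriv ?_
  have hss : Real.sqrt (t-r) * Real.sqrt (t-r) = t - r := Real.mul_self_sqrt hu.le
  field_simp
  nlinarith [hss]

lemma K'_abs_le {D t r : ℝ} (hD : 0 < D) (hrt : r < t) :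
    |Real.exp (-D/(t-r)) * ((1/2 - D/(t-r)) / ((t-r) * Real.sqrt (t-r)))|
      ≤ (3/2) / ((t-r) * Real.sqrt (t-r)) := by
  have hu : 0 < t - r := sub_pos.2 hrt
  have hden : 0 < (t-r) * Real.sqrt (t-r) := by positivity
  have hx : 0 ≤ D / (t-r) := div_nonneg hD.le hu.le
  have h1 : Real.exp (-(D/(t-r))) * (D/(t-r)) ≤ 1 := by
    rw [Real.exp_neg, inv_mul_eq_div, div_le_one (Real.exp_pos _)]
    linarith [Real.add_one_le_exp (D/(t-r))]
  have h2 : Real.exp (-(D/(t-r))) ≤ 1 := by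
    rw [Real.exp_le_one_iff]; linarith
  rw [abs_mul, abs_div, abs_of_pos hden, abs_of_pos (Real.exp_pos _), ← mul_div_assoc]
  gcongr
  calc Real.exp (-D/(t-r)) * |1/2 - D/(t-r)|
      ≤ Real.exp (-D/(t-r)) * (1/2 + D/(t-r)) := by
        refine mul_le_mul_of_nonneg_left ?_ (Real.exp_pos _).le
        calc |1/2 - D/(t-r)| ≤ |(1:ℝ)/2| + |D/(t-r)| := abs_sub _ _
          _ = 1/2 + D/(t-r) := by rw [abs_of_nonneg hx]; norm_num
    _ = Real.exp (-(D/(t-r))) * (1/2) + Real.exp (-(D/(t-r))) * (D/(t-r)) := by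
        rw [neg_div]; ring
    _ ≤ 1 * (1/2) + 1 := add_le_add (mul_le_mul_of_nonneg_right h2 (by norm_num)) h1
    _ ≤ 3/2 := by norm_num


lemma ibp {b : ℝ} (hb : 0 ≤ b) (f K K' : ℝ → ℝ) (hfm : Measurable f)
    (hK'm : Measurable K') {M M' : ℝ}
    (hfM : ∀ s ∈ Set.Icc (0:ℝ) b, |f s| ≤ M)
    (hK'M : ∀ r ∈ Set.Icc (0:ℝ) b, |K' r| ≤ M')
    (hKd : ∀ s ∈ Set.Icc (0:ℝ) b, HasDerivAt K (K' s) s) :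
    ∫ s in (0:ℝ)..b, K s * f s
      = K b * (∫ v in (0:ℝ)..b, f v)
        - ∫ r in (0:ℝ)..b, K' r * ∫ v in (0:ℝ)..r, f v := by
  have hM0 : 0 ≤ M := le_trans (abs_nonneg _) (hfM 0 ⟨le_rfl, hb⟩)
  have hM'0 : 0 ≤ M' := le_trans (abs_nonneg _) (hK'M 0 ⟨le_rfl, hb⟩)
  -- integrability of K' on subintervals
  have hK'int : ∀ s ∈ Set.Icc (0:ℝ) b, IntervalIntegrable K' volume s b := by
    intro s hs
    rw [intervalIntegrable_iff_integrableOn_Ioc_of_le hs.2]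
    refine Measure.integrableOn_of_bounded (M := M') measure_Ioc_lt_top.ne
      hK'm.aestronglyMeasurable ?_
    filter_upwards [ae_restrict_mem measurableSet_Ioc] with r hr
    exact Real.norm_eq_abs (K' r) ▸ hK'M r ⟨le_trans hs.1 hr.1.le, hr.2⟩
  -- integrability of f on subintervals
  have hfint : ∀ r ∈ Set.Icc (0:ℝ) b, IntervalIntegrable f volume 0 r := by
    intro r hr
    rw [intervalIntegrable_iff_integrableOn_Ioc_of_le hr.1]
    refine Measure.integrableOn_of_bounded (M := M) measure_Ioc_lt_top.ne
      hfm.aestronglyMeasurable ?_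
    filter_upwards [ae_restrict_mem measurableSet_Ioc] with s hs
    exact Real.norm_eq_abs (f s) ▸ hfM s ⟨hs.1.le, le_trans hs.2 hr.2⟩
  -- representation of K via FTC
  have hKrepr : ∀ s ∈ Set.Icc (0:ℝ) b, K s = K b - ∫ r in s..b, K' r := by
    intro s hs
    have h := intervalIntegral.integral_eq_sub_of_hasDerivAt (f := K) (f' := K')
      (fun x hx => by
        rw [Set.uIcc_of_le hs.2] at hx
        exact hKd x ⟨le_trans hs.1 hx.1, hx.2⟩)
      (hK'int s hs)
    linarith [h]
  set F : ℝ × ℝ → ℝ := fun p => if p.1 ≤ p.2 then K' p.2 * f p.1 else 0 with hFdef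
  have hFm : Measurable F :=
    Measurable.ite (measurableSet_le measurable_fst measurable_snd)
      ((hK'm.comp measurable_snd).mul (hfm.comp measurable_fst)) measurable_const
  have hFint : Integrable F
      ((volume.restrict (Set.Ioc (0:ℝ) b)).prod (volume.restrict (Set.Ioc (0:ℝ) b))) := by
    rw [Measure.prod_restrict]
    refine Measure.integrableOn_of_bounded (M := M' * M) ?_ hFm.aestronglyMeasurable ?_
    · rw [Measure.prod_prod]
      exact ENNReal.mul_ne_top measure_Ioc_lt_top.ne measure_Ioc_lt_top.ne
    · filter_upwards [ae_restrict_mem (measurableSet_Ioc.prod measurableSet_Ioc)] with p hp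
      obtain ⟨hp1, hp2⟩ := hp
      by_cases hle : p.1 ≤ p.2
      · simp only [hFdef, if_pos hle, Real.norm_eq_abs, abs_mul]
        exact mul_le_mul (hK'M _ ⟨hp2.1.le, hp2.2⟩) (hfM _ ⟨hp1.1.le, hp1.2⟩)
          (abs_nonneg _) hM'0
      · simp only [hFdef, if_neg hle, norm_zero]
        positivity
  -- inner integral computations
  have hinner1 : ∀ s ∈ Set.Ioc (0:ℝ) b,
      (∫ r in Set.Ioc (0:ℝ) b, F (s, r)) = (∫ r in s..b, K' r) * f s := by
    intro s hs
    have heq : (fun r => F (s, r)) = Set.indicator (Set.Ici s) (fun r => K' r * f s) := by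
      funext r
      simp only [hFdef, Set.indicator_apply, Set.mem_Ici]
    rw [heq, MeasureTheory.integral_indicator measurableSet_Ici,
      Measure.restrict_restrict measurableSet_Ici]
    have hset : Set.Ici s ∩ Set.Ioc 0 b = Set.Icc s b := by
      ext r
      simp only [Set.mem_inter_iff, Set.mem_Ici, Set.mem_Ioc, Set.mem_Icc]
      exact ⟨fun ⟨h1, _, h3⟩ => ⟨h1, h3⟩, fun ⟨h1, h2⟩ => ⟨h1, lt_of_lt_of_le hs.1 h1, h2⟩⟩
    rw [hset, integral_Icc_eq_integral_Ioc, MeasureTheory.integral_mul_const,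
      ← intervalIntegral.integral_of_le hs.2]
  have hinner2 : ∀ r ∈ Set.Ioc (0:ℝ) b,
      (∫ s in Set.Ioc (0:ℝ) b, F (s, r)) = K' r * ∫ v in (0:ℝ)..r, f v := by
    intro r hr
    have heq : (fun s => F (s, r)) = Set.indicator (Set.Iic r) (fun s => K' r * f s) := by
      funext s
      simp only [hFdef, Set.indicator_apply, Set.mem_Iic]
    rw [heq, MeasureTheory.integral_indicator measurableSet_Iic,
      Measure.restrict_restrict measurableSet_Iic]
    have hset : Set.Iic r ∩ Set.Ioc 0 b = Set.Ioc 0 r := by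
      ext s
      simp only [Set.mem_inter_iff, Set.mem_Iic, Set.mem_Ioc]
      exact ⟨fun ⟨h1, h2, _⟩ => ⟨h2, h1⟩, fun ⟨h1, h2⟩ => ⟨h2, h1, le_trans h2 hr.2⟩⟩
    rw [hset, MeasureTheory.integral_const_mul, ← intervalIntegral.integral_of_le hr.1.le]
  -- Fubini swap
  have hswap : (∫ s in Set.Ioc (0:ℝ) b, ((∫ r in s..b, K' r) * f s))
      = ∫ r in Set.Ioc (0:ℝ) b, (K' r * ∫ v in (0:ℝ)..r, f v) := by
    calc (∫ s in Set.Ioc (0:ℝ) b, ((∫ r in s..b, K' r) * f s))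
        = ∫ s in Set.Ioc (0:ℝ) b, (∫ r in Set.Ioc (0:ℝ) b, F (s, r)) :=
          (setIntegral_congr_fun measurableSet_Ioc fun s hs => (hinner1 s hs).symm)
      _ = ∫ r in Set.Ioc (0:ℝ) b, (∫ s in Set.Ioc (0:ℝ) b, F (s, r)) :=
          MeasureTheory.integral_integral_swap (f := fun s r => F (s, r)) hFint
      _ = ∫ r in Set.Ioc (0:ℝ) b, (K' r * ∫ v in (0:ℝ)..r, f v) :=
          setIntegral_congr_fun measurableSet_Ioc fun r hr => hinner2 r hr
  -- assembling
  have hint1 : IntervalIntegrable (fun s => K b * f s) volume 0 b :=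
    (hfint b ⟨hb, le_rfl⟩).const_mul (K b)
  have hint2 : IntervalIntegrable (fun s => (∫ r in s..b, K' r) * f s) volume 0 b := by
    rw [intervalIntegrable_iff_integrableOn_Ioc_of_le hb]
    have hmarg : Integrable (fun s => ∫ r in Set.Ioc (0:ℝ) b, F (s, r))
        (volume.restrict (Set.Ioc (0:ℝ) b)) := hFint.integral_prod_left
    exact hmarg.congr ((ae_restrict_iff' measurableSet_Ioc).2
      (Filter.Eventually.of_forall fun s hs => hinner1 s hs))
  calc ∫ s in (0:ℝ)..b, K s * f s
      = ∫ s in (0:ℝ)..b, (K b * f s - (∫ r in s..b, K' r) * f s) := by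
        apply intervalIntegral.integral_congr
        intro s hs
        rw [Set.uIcc_of_le hb] at hs
        show K s * f s = K b * f s - (∫ r in s..b, K' r) * f s
        rw [hKrepr s hs]; ring
    _ = (∫ s in (0:ℝ)..b, K b * f s)
        - ∫ s in (0:ℝ)..b, (∫ r in s..b, K' r) * f s :=
          intervalIntegral.integral_sub hint1 hint2
    _ = K b * (∫ v in (0:ℝ)..b, f v)
        - ∫ r in (0:ℝ)..b, K' r * ∫ v in (0:ℝ)..r, f v := by
        rw [intervalIntegral.integral_const_mul]
        congr 1
        rw [intervalIntegral.integral_of_le hb, intervalIntegral.integral_of_le hb, hswap]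


end AveragingAux

open AveragingAux

/-- Lemma 4.1 of the paper: if `H(r,y) = h(r,y) - h̄(y)` and
`G(r,y) = ∫₀ʳ (h(v,y) - h̄(y)) dv` are bounded, then the supremum over
`y ∈ ℝ^d`, `D > 0`, `ε > 0`, `t ∈ (0,T]` of
`|(1/√ε) ∫₀ᵗ (e^{-D/(t-s)}/√(t-s)) (h(s/ε,y) - h̄(y)) ds|` is finite. -/
theorem averaging_kernel_estimate (d : ℕ) (T : ℝ) (hT : 0 < T)
    (h : ℝ → (Fin d → ℝ) → ℝ) (hbar : (Fin d → ℝ) → ℝ)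
    (hmeas : Measurable (Function.uncurry h)) (hbarmeas : Measurable hbar)
    (CH : ℝ) (hH : ∀ r : ℝ, 0 ≤ r → ∀ y, |h r y - hbar y| ≤ CH)
    (CG : ℝ) (hG : ∀ r : ℝ, 0 ≤ r → ∀ y,
      |∫ v in (0:ℝ)..r, (h v y - hbar y)| ≤ CG) :
    ∃ C : ℝ, ∀ (y : Fin d → ℝ) (D ε t : ℝ), 0 < D → 0 < ε → 0 < t → t ≤ T →
      |(1 / Real.sqrt ε) *
        ∫ s in (0:ℝ)..t,
          (Real.exp (-D / (t - s)) / Real.sqrt (t - s)) * (h (s / ε) y - hbar y)|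
        ≤ C := by
  refine ⟨4 * CG + 2 * CH, ?_⟩
  intro y D ε t hD hε ht htT
  have hCH0 : 0 ≤ CH := le_trans (abs_nonneg _) (hH 0 le_rfl y)
  have hCG0 : 0 ≤ CG := le_trans (abs_nonneg _) (hG 0 le_rfl y)
  have hsε : 0 < Real.sqrt ε := Real.sqrt_pos.2 hε
  have hε' : Real.sqrt ε * Real.sqrt ε = ε := Real.mul_self_sqrt hε.le
  set f : ℝ → ℝ := fun s => h (s / ε) y - hbar y with hfdef
  have hfm : Measurable f := by
    refine Measurable.sub ?_ measurable_const
    exact hmeas.comp ((measurable_id.div_const ε).prodMk measurable_const)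
  have hfb : ∀ s, 0 ≤ s → |f s| ≤ CH := fun s hs => hH _ (div_nonneg hs hε.le) y
  have hΦ : ∀ r, 0 ≤ r → |∫ v in (0:ℝ)..r, f v| ≤ ε * CG := by
    intro r hr
    have hcomp : (∫ x in (0:ℝ)..r, (h (x/ε) y - hbar y))
        = ε • ∫ x in (0:ℝ)..r/ε, (h x y - hbar y) := by
      simpa using intervalIntegral.integral_comp_div (a := 0) (b := r) (c := ε)
        (f := fun v => h v y - hbar y) hε.ne'
    simp only [hfdef]
    rw [hcomp, smul_eq_mul, abs_mul, abs_of_pos hε]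
    exact mul_le_mul_of_nonneg_left (hG _ (div_nonneg hr hε.le) y) hε.le
  rw [abs_mul, abs_of_pos (by positivity : (0:ℝ) < 1 / Real.sqrt ε)]
  show 1 / Real.sqrt ε *
      |∫ s in (0:ℝ)..t, (Real.exp (-D / (t - s)) / Real.sqrt (t - s)) * f s|
      ≤ 4 * CG + 2 * CH
  rcases le_or_gt t ε with hte | hεt
  · -- easy case : t ≤ ε
    have htail := tail_bound (a := 0) hD le_rfl ht.le hfb
    rw [sub_zero] at htail
    calc 1 / Real.sqrt ε * |∫ s in (0:ℝ)..t,
          (Real.exp (-D / (t - s)) / Real.sqrt (t - s)) * f s|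
        ≤ 1 / Real.sqrt ε * (CH * (2 * Real.sqrt t)) := by
          exact mul_le_mul_of_nonneg_left htail (by positivity)
      _ ≤ 1 / Real.sqrt ε * (CH * (2 * Real.sqrt ε)) := by
          gcongr
      _ = 2 * CH := by field_simp
      _ ≤ 4 * CG + 2 * CH := by linarith
  · -- main case : ε < t
    have hb0 : (0:ℝ) ≤ t - ε := by linarith
    have hbt : t - ε < t := by linarith
    have htb : t - (t - ε) = ε := by ring
    set K : ℝ → ℝ := fun s => Real.exp (-D/(t-s)) / Real.sqrt (t-s) with hKdef
    set K' : ℝ → ℝ := fun r =>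
      Real.exp (-D/(t-r)) * ((1/2 - D/(t-r)) / ((t-r) * Real.sqrt (t-r))) with hK'def
    have hm1 : Measurable fun s : ℝ => t - s := measurable_const.sub measurable_id
    have hsqm : Measurable fun s : ℝ => Real.sqrt (t - s) :=
      Real.continuous_sqrt.measurable.comp hm1
    have hK'm : Measurable K' := by
      rw [hK'def]
      exact ((measurable_const.div hm1).exp).mul
        (((measurable_const.sub (measurable_const.div hm1))).div (hm1.mul hsqm))
    have hKd : ∀ s ∈ Set.Icc (0:ℝ) (t-ε), HasDerivAt K (K' s) s :=
      fun s hs => kernel_hasDerivAt (lt_of_le_of_lt hs.2 hbt)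
    have hfM : ∀ s ∈ Set.Icc (0:ℝ) (t-ε), |f s| ≤ CH := fun s hs => hfb s hs.1
    have hM' : ∀ r ∈ Set.Icc (0:ℝ) (t-ε), |K' r| ≤ (3/2) / (ε * Real.sqrt ε) := by
      intro r hr
      refine (K'_abs_le hD (lt_of_le_of_lt hr.2 hbt)).trans ?_
      have h1 : ε ≤ t - r := by linarith [hr.2]
      gcongr
      linarith
    have hibp := ibp hb0 f K K' hfm hK'm hfM hM' hKd
    -- boundary term bound
    have hbound : |K (t-ε) * ∫ v in (0:ℝ)..(t-ε), f v| ≤ (1 / Real.sqrt ε) * (ε * CG) := by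
      rw [abs_mul]
      refine mul_le_mul ?_ (hΦ _ hb0) (abs_nonneg _) (by positivity)
      rw [hKdef]
      simp only
      rw [abs_of_nonneg (kernel_nonneg D t (t-ε)), htb]
      have := kernel_le (s := t - ε) hD hbt.le
      rwa [htb] at this
    -- bound on the K' integral
    have hcden : ∀ r ∈ Set.uIcc (0:ℝ) (t-ε), (t - r) * Real.sqrt (t - r) ≠ 0 := by
      intro r hr
      rw [Set.uIcc_of_le hb0] at hr
      have : 0 < t - r := by have := hr.2; linarith
      positivity
    have hcont : ContinuousOn (fun r => (3/2) / ((t-r) * Real.sqrt (t-r)))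
        (Set.uIcc (0:ℝ) (t-ε)) := by
      refine ContinuousOn.div continuousOn_const ?_ hcden
      exact ((continuous_const.sub continuous_id).mul
        (Real.continuous_sqrt.comp (continuous_const.sub continuous_id))).continuousOn
    have hgint : IntervalIntegrable (fun r => (3/2) / ((t-r) * Real.sqrt (t-r)))
        volume 0 (t-ε) := hcont.intervalIntegrable
    have hgval : (∫ r in (0:ℝ)..(t-ε), (3/2) / ((t-r) * Real.sqrt (t-r)))
        = 3 / Real.sqrt ε - 3 / Real.sqrt t := by
      have := intervalIntegral.integral_eq_sub_of_hasDerivAt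
        (f := fun r => 3 / Real.sqrt (t - r))
        (f' := fun r => (3/2) / ((t-r) * Real.sqrt (t-r)))
        (fun x hx => by
          rw [Set.uIcc_of_le hb0] at hx
          exact psi_hasDerivAt (lt_of_le_of_lt hx.2 hbt)) hgint
      refine this.trans ?_
      show (3:ℝ)/Real.sqrt (t - (t-ε)) - 3/Real.sqrt (t - 0) = _
      rw [htb, sub_zero]
    have hK'bound : |∫ r in (0:ℝ)..(t-ε), K' r * ∫ v in (0:ℝ)..r, f v|
        ≤ (ε * CG) * (3 / Real.sqrt ε) := by
      have hptw : ∀ᵐ r ∂volume.restrict (Set.uIoc (0:ℝ) (t-ε)),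
          ‖K' r * ∫ v in (0:ℝ)..r, f v‖
            ≤ (ε * CG) * ((3/2) / ((t-r) * Real.sqrt (t-r))) := by
        filter_upwards [ae_restrict_mem measurableSet_uIoc] with r hr
        rw [Set.uIoc_of_le hb0] at hr
        rw [Real.norm_eq_abs, abs_mul, mul_comm (ε * CG)]
        refine mul_le_mul (K'_abs_le hD (by linarith [hr.2])) (hΦ r hr.1.le)
          (abs_nonneg _) ?_
        have : 0 < t - r := by linarith [hr.2]
        positivity
      have hkey := intervalIntegral.norm_integral_le_abs_of_norm_le hptw
        (hgint.const_mul (ε * CG))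
      rw [Real.norm_eq_abs] at hkey
      refine hkey.trans ?_
      rw [intervalIntegral.integral_const_mul, hgval]
      have hts : Real.sqrt ε ≤ Real.sqrt t := Real.sqrt_le_sqrt hεt.le
      have h3 : 0 < Real.sqrt t := lt_of_lt_of_le hsε hts
      have hnn : (0:ℝ) ≤ 3 / Real.sqrt ε - 3 / Real.sqrt t := by
        have : 3 / Real.sqrt t ≤ 3 / Real.sqrt ε := by gcongr
        linarith
      rw [abs_of_nonneg (by positivity)]
      have : 3 / Real.sqrt t ≥ 0 := by positivity
      nlinarith [mul_nonneg hε.le hCG0]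
    -- tail bound
    have htail := tail_bound (a := t - ε) hD hb0 hbt.le hfb
    rw [htb] at htail
    -- splitting
    have hsplit := intervalIntegral.integral_add_adjacent_intervals
      (kernel_mul_intervalIntegrable hD le_rfl hb0 hbt.le hfm hfb)
      (kernel_mul_intervalIntegrable hD hb0 hbt.le le_rfl hfm hfb)
    have hA : |∫ s in (0:ℝ)..(t-ε), (Real.exp (-D/(t-s)) / Real.sqrt (t-s)) * f s|
        ≤ (1 / Real.sqrt ε) * (ε * CG) + (ε * CG) * (3 / Real.sqrt ε) := by
      show |∫ s in (0:ℝ)..(t-ε), K s * f s| ≤ _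
      rw [hibp]
      exact (abs_sub _ _).trans (add_le_add hbound hK'bound)
    calc 1 / Real.sqrt ε * |∫ s in (0:ℝ)..t,
          (Real.exp (-D / (t - s)) / Real.sqrt (t - s)) * f s|
        ≤ 1 / Real.sqrt ε *
            (((1 / Real.sqrt ε) * (ε * CG) + (ε * CG) * (3 / Real.sqrt ε))
              + CH * (2 * Real.sqrt ε)) := by
          refine mul_le_mul_of_nonneg_left ?_ (by positivity)
          rw [← hsplit]
          exact (abs_add_le _ _).trans (add_le_add hA htail)
      _ = 4 * CG + 2 * CH := by
          field_simp
          linear_combination (-4 * CG) * hε'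
end

section
/- For the heat kernel p(t,x) = (2√(πt))^{-1}e^{-x²/(4t)}, there is a constant C (depending on T and λ) such that for all t ∈ (0,T], x, y ∈ ℝ with |x - y| ≤ 2, and 0 < h ≤ 1: ∫₀ᵗ |e^{-(x-y-h)²/(4(t-s))} - e^{-(x-y)²/(4(t-s))}| / √(t-s) ds ≤ C·h·(1 + |ln h|). -/
open MeasureTheory Real intervalIntegral

/-- The Gaussian profile `r ↦ e^{-r²/(4u)}` is `1/√u`-Lipschitz. -/
lemma gauss_lipschitz (u : ℝ) (hu : 0 < u) (a b : ℝ) :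
    |Real.exp (-a ^ 2 / (4 * u)) - Real.exp (-b ^ 2 / (4 * u))| ≤ |a - b| / Real.sqrt u := by
  have hsu : 0 < Real.sqrt u := Real.sqrt_pos.mpr hu
  have hderiv : ∀ r : ℝ, HasDerivAt (fun r : ℝ => Real.exp (-r ^ 2 / (4 * u)))
      (Real.exp (-r ^ 2 / (4 * u)) * (-(2 * r) / (4 * u))) r := by
    intro r
    have h1 : HasDerivAt (fun r : ℝ => -r ^ 2 / (4 * u)) (-(2 * r) / (4 * u)) r := by
      have := ((hasDerivAt_pow 2 r).neg).div_const (4 * u)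
      simpa using this
    exact h1.exp
  have hbound : ∀ r : ℝ, ‖Real.exp (-r ^ 2 / (4 * u)) * (-(2 * r) / (4 * u))‖
      ≤ 1 / Real.sqrt u := by
    intro r
    set z : ℝ := |r| / (2 * Real.sqrt u) with hz_def
    have hz : 0 ≤ z := by positivity
    have hz2 : z ^ 2 = r ^ 2 / (4 * u) := by
      rw [hz_def, div_pow, mul_pow, sq_abs, Real.sq_sqrt hu.le]
      norm_num
    have hkey : z * Real.exp (-z ^ 2) ≤ 1 := by
      have h1 : z ≤ Real.exp (z ^ 2) := by
        have h2 := Real.add_one_le_exp (z ^ 2)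
        nlinarith
      rw [Real.exp_neg, ← div_eq_mul_inv, div_le_one (Real.exp_pos _)]
      exact h1
    have hr : |r| = z * (2 * Real.sqrt u) := by
      rw [hz_def]; field_simp
    have hexp : -r ^ 2 / (4 * u) = -z ^ 2 := by rw [hz2]; ring
    rw [Real.norm_eq_abs, abs_mul, Real.abs_exp, abs_div, abs_neg, abs_mul,
      abs_of_pos (by norm_num : (0:ℝ) < 2), abs_of_pos (by positivity : (0:ℝ) < 4 * u),
      hexp, hr]
    have h4u : (4:ℝ) * u = 4 * (Real.sqrt u * Real.sqrt u) := by
      rw [Real.mul_self_sqrt hu.le]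
    rw [h4u]
    have heq : Real.exp (-z ^ 2) * (2 * (z * (2 * Real.sqrt u)) / (4 * (Real.sqrt u * Real.sqrt u)))
        = z * Real.exp (-z ^ 2) / Real.sqrt u := by
      field_simp
      ring
    rw [heq]
    gcongr
  have H := Convex.norm_image_sub_le_of_norm_hasDerivWithin_le
    (f := fun r : ℝ => Real.exp (-r ^ 2 / (4 * u)))
    (f' := fun r : ℝ => Real.exp (-r ^ 2 / (4 * u)) * (-(2 * r) / (4 * u)))
    (s := Set.univ) (C := 1 / Real.sqrt u)
    (fun x _ => (hderiv x).hasDerivWithinAt) (fun x _ => hbound x) convex_univ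
    (Set.mem_univ b) (Set.mem_univ a)
  rw [Real.norm_eq_abs, Real.norm_eq_abs] at H
  calc |Real.exp (-a ^ 2 / (4 * u)) - Real.exp (-b ^ 2 / (4 * u))|
      ≤ 1 / Real.sqrt u * |a - b| := H
    _ = |a - b| / Real.sqrt u := by ring

lemma gauss_diff_le_one (u a b : ℝ) (hu : 0 < u) :
    |Real.exp (-a ^ 2 / (4 * u)) - Real.exp (-b ^ 2 / (4 * u))| ≤ 1 := by
  have h1 : Real.exp (-a ^ 2 / (4 * u)) ≤ 1 :=
    Real.exp_le_one_iff.mpr (div_nonpos_iff.mpr (Or.inr ⟨neg_nonpos.mpr (sq_nonneg _), by positivity⟩))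
  have h2 : Real.exp (-b ^ 2 / (4 * u)) ≤ 1 :=
    Real.exp_le_one_iff.mpr (div_nonpos_iff.mpr (Or.inr ⟨neg_nonpos.mpr (sq_nonneg _), by positivity⟩))
  have h3 := Real.exp_pos (-a ^ 2 / (4 * u))
  have h4 := Real.exp_pos (-b ^ 2 / (4 * u))
  rw [abs_sub_le_iff]
  constructor <;> linarith

/-- For the heat kernel there is a constant `C` such that for all `t ∈ (0,T]`,
`|x-y| ≤ 2` and `0 < h ≤ 1`:
`∫₀ᵗ |e^{-(x-y-h)²/(4(t-s))} - e^{-(x-y)²/(4(t-s))}|/√(t-s) ds ≤ C·h·(1+|ln h|)`. -/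
theorem exp_difference_integral_estimate_near (T : ℝ) (hT : 0 < T) :
    ∃ C > (0:ℝ), ∀ t x y h : ℝ, 0 < t → t ≤ T → |x - y| ≤ 2 → 0 < h → h ≤ 1 →
      (∫ s in (0:ℝ)..t,
          |Real.exp (-(x - y - h) ^ 2 / (4 * (t - s))) -
              Real.exp (-(x - y) ^ 2 / (4 * (t - s)))| / Real.sqrt (t - s))
        ≤ C * h * (1 + |Real.log h|) := by
  refine ⟨4 + |Real.log T|, by positivity, ?_⟩
  intro t x y h ht htT _ hh hh1
  set a : ℝ := x - y - h with ha
  set b : ℝ := x - y with hb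
  set F : ℝ → ℝ := fun u =>
    |Real.exp (-a ^ 2 / (4 * u)) - Real.exp (-b ^ 2 / (4 * u))| / Real.sqrt u with hF
  have hL : 0 ≤ |Real.log h| := abs_nonneg _
  have hA : 0 ≤ |Real.log T| := abs_nonneg _
  -- change of variables u = t - s
  have hsub : (∫ s in (0:ℝ)..t,
      |Real.exp (-(x - y - h) ^ 2 / (4 * (t - s))) -
        Real.exp (-(x - y) ^ 2 / (4 * (t - s)))| / Real.sqrt (t - s))
      = ∫ u in (0:ℝ)..t, F u := by
    have := intervalIntegral.integral_comp_sub_left (a := (0:ℝ)) (b := t) F t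
    simpa [hF] using this
  rw [hsub]
  -- measurability of F
  have hFmeas : Measurable F := by
    apply Measurable.div
    · apply Measurable.abs
      apply Measurable.sub <;>
      · apply Real.measurable_exp.comp
        exact (measurable_const.div (measurable_const.mul measurable_id))
    · exact Real.continuous_sqrt.measurable
  have hFnonneg : ∀ u, 0 ≤ F u := fun u => by positivity
  -- pointwise bound by u^(-1/2)
  have hF_le_rpow : ∀ u : ℝ, 0 ≤ u → F u ≤ u ^ (-(1:ℝ)/2) := by
    intro u hu
    rcases eq_or_lt_of_le hu with rfl | hu'
    · simp [hF, Real.zero_rpow (by norm_num : (-(1:ℝ)/2) ≠ 0)]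
    · have hsu : 0 < Real.sqrt u := Real.sqrt_pos.mpr hu'
      have h1 : F u ≤ 1 / Real.sqrt u := by
        show |Real.exp (-a ^ 2 / (4 * u)) - Real.exp (-b ^ 2 / (4 * u))| / Real.sqrt u
          ≤ 1 / Real.sqrt u
        gcongr
        exact gauss_diff_le_one u a b hu'
      have h2 : u ^ (-(1:ℝ)/2) = 1 / Real.sqrt u := by
        rw [Real.sqrt_eq_rpow, one_div, ← Real.rpow_neg hu'.le]
        norm_num
      rw [h2]; exact h1
  -- integrability of u^(-1/2)
  have hrpow_int : ∀ c : ℝ, IntervalIntegrable (fun u : ℝ => u ^ (-(1:ℝ)/2)) volume 0 c := by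
    intro c
    exact intervalIntegral.intervalIntegrable_rpow' (by norm_num)
  -- integrability of F on [0, c]
  have hFint : ∀ c : ℝ, 0 ≤ c → IntervalIntegrable F volume 0 c := by
    intro c hc
    apply IntervalIntegrable.mono_fun' (hrpow_int c)
    · exact hFmeas.aestronglyMeasurable
    · rw [Set.uIoc_of_le hc]
      filter_upwards [ae_restrict_mem measurableSet_Ioc] with u hu
      rw [Real.norm_eq_abs, abs_of_nonneg (hFnonneg u)]
      exact hF_le_rpow u hu.1.le
  -- value of ∫ u^(-1/2)
  have hrpow_val : ∀ c : ℝ, 0 ≤ c → (∫ u in (0:ℝ)..c, u ^ (-(1:ℝ)/2)) = 2 * Real.sqrt c := by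
    intro c hc
    rw [integral_rpow (Or.inl (by norm_num))]
    rw [Real.zero_rpow (by norm_num : (-(1:ℝ)/2 + 1) ≠ 0)]
    rw [Real.sqrt_eq_rpow]
    norm_num
    ring
  by_cases hcase : t ≤ h ^ 2
  · -- small t: bound by ∫ u^(-1/2) = 2√t ≤ 2h
    have hmono : (∫ u in (0:ℝ)..t, F u) ≤ ∫ u in (0:ℝ)..t, u ^ (-(1:ℝ)/2) := by
      apply intervalIntegral.integral_mono_on ht.le (hFint t ht.le) (hrpow_int t)
      intro u hu
      exact hF_le_rpow u hu.1
    rw [hrpow_val t ht.le] at hmono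
    have hst : Real.sqrt t ≤ h := by
      calc Real.sqrt t ≤ Real.sqrt (h ^ 2) := Real.sqrt_le_sqrt hcase
        _ = h := by rw [Real.sqrt_sq hh.le]
    nlinarith [mul_nonneg hA (mul_nonneg hh.le hL), mul_nonneg hh.le hL,
      mul_nonneg hA hh.le]
  · -- large t: split at h²
    push_neg at hcase
    have hh2 : 0 < h ^ 2 := by positivity
    have hFcont : ContinuousOn F (Set.uIcc (h ^ 2) t) := by
      rw [Set.uIcc_of_le hcase.le]
      apply ContinuousOn.div
      · apply ContinuousOn.abs
        apply ContinuousOn.sub <;>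
        · apply Real.continuous_exp.comp_continuousOn
          apply ContinuousOn.div continuousOn_const
            (continuousOn_const.mul continuousOn_id)
          intro u hu
          have : 0 < u := lt_of_lt_of_le hh2 hu.1
          exact mul_ne_zero (by norm_num) (ne_of_gt this)
      · exact Real.continuous_sqrt.continuousOn
      · intro u hu
        have : 0 < u := lt_of_lt_of_le hh2 hu.1
        have := Real.sqrt_pos.mpr this
        positivity
    have hFint2 : IntervalIntegrable F volume (h ^ 2) t := hFcont.intervalIntegrable
    have hsplit : (∫ u in (0:ℝ)..t, F u)
        = (∫ u in (0:ℝ)..(h ^ 2), F u) + ∫ u in (h ^ 2)..t, F u :=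
      (intervalIntegral.integral_add_adjacent_intervals (hFint (h ^ 2) hh2.le) hFint2).symm
    -- first piece ≤ 2h
    have hfirst : (∫ u in (0:ℝ)..(h ^ 2), F u) ≤ 2 * h := by
      have hmono : (∫ u in (0:ℝ)..(h ^ 2), F u) ≤ ∫ u in (0:ℝ)..(h ^ 2), u ^ (-(1:ℝ)/2) := by
        apply intervalIntegral.integral_mono_on hh2.le (hFint (h ^ 2) hh2.le)
          (hrpow_int (h ^ 2))
        intro u hu
        exact hF_le_rpow u hu.1
      rwa [hrpow_val (h ^ 2) hh2.le, Real.sqrt_sq hh.le] at hmono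
    -- second piece ≤ h * (log t - 2 log h)
    have hsecond : (∫ u in (h ^ 2)..t, F u) ≤ h * (Real.log t - 2 * Real.log h) := by
      have hint1 : IntervalIntegrable (fun u : ℝ => h * (1 / u)) volume (h ^ 2) t := by
        apply ContinuousOn.intervalIntegrable
        apply ContinuousOn.mul continuousOn_const
        apply ContinuousOn.div continuousOn_const continuousOn_id
        intro u hu
        rw [Set.uIcc_of_le hcase.le] at hu
        exact ne_of_gt (lt_of_lt_of_le hh2 hu.1)
      have hmono : (∫ u in (h ^ 2)..t, F u) ≤ ∫ u in (h ^ 2)..t, h * (1 / u) := by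
        apply intervalIntegral.integral_mono_on hcase.le hFint2 hint1
        intro u hu
        have hu0 : 0 < u := lt_of_lt_of_le hh2 hu.1
        have hsu : 0 < Real.sqrt u := Real.sqrt_pos.mpr hu0
        have hab : |a - b| = h := by rw [ha, hb]; simp [abs_of_pos hh]
        have h1 : F u ≤ (h / Real.sqrt u) / Real.sqrt u := by
          show |Real.exp (-a ^ 2 / (4 * u)) - Real.exp (-b ^ 2 / (4 * u))| / Real.sqrt u
            ≤ (h / Real.sqrt u) / Real.sqrt u
          gcongr
          rw [← hab]
          exact gauss_lipschitz u hu0 a b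
        have h2 : (h / Real.sqrt u) / Real.sqrt u = h * (1 / u) := by
          rw [div_div, Real.mul_self_sqrt hu0.le]
          ring
        rwa [h2] at h1
      have hval : (∫ u in (h ^ 2)..t, h * (1 / u)) = h * (Real.log t - 2 * Real.log h) := by
        rw [intervalIntegral.integral_const_mul, integral_one_div]
        · rw [Real.log_div (ne_of_gt ht) (ne_of_gt hh2), Real.log_pow]
          push_cast
          ring
        · rw [Set.uIcc_of_le hcase.le]
          intro hmem
          exact absurd hmem.1 (not_le.mpr hh2)
      rwa [hval] at hmono
    rw [hsplit]
    have hlogt : Real.log t ≤ |Real.log T| :=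
      le_trans (Real.log_le_log ht (by linarith)) (le_abs_self _)
    have hlogh : -Real.log h = |Real.log h| := by
      rw [abs_of_nonpos (Real.log_nonpos hh.le hh1)]
    nlinarith [mul_nonneg hh.le hL, mul_nonneg hA (mul_nonneg hh.le hL),
      mul_le_mul_of_nonneg_left hlogt hh.le]
end

section
/- Under the assumptions that H(s,y) = σ(s,y) - σ̄(y) is bounded and G(r,y) = ∫₀ʳ(σ(s,y)-σ̄(y))ds is bounded, there is a constant C such that for all t ∈ (0,T], x, y ∈ ℝ, ε > 0: |∫₀ᵗ p(t-s, x-y)(σ(s/ε, y) - σ̄(y)) ds| ≤ C√ε, where p is the Gaussian heat kernel. -/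
open MeasureTheory Real intervalIntegral


lemma swap_triangle (b : ℝ) (hb : 0 ≤ b) (g φ : ℝ → ℝ)
    (hgm : Measurable g) (hφm : Measurable φ)
    (Mg Mφ : ℝ) (hMg : ∀ s ∈ Set.Icc 0 b, |g s| ≤ Mg) (hMφ : ∀ r ∈ Set.Icc 0 b, |φ r| ≤ Mφ) :
    ∫ s in (0:ℝ)..b, g s * (∫ r in s..b, φ r) =
      ∫ r in (0:ℝ)..b, (∫ s in (0:ℝ)..r, g s) * φ r := by
  have hMg0 : 0 ≤ Mg := le_trans (abs_nonneg _) (hMg 0 ⟨le_refl _, hb⟩)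
  have hMφ0 : 0 ≤ Mφ := le_trans (abs_nonneg _) (hMφ 0 ⟨le_refl _, hb⟩)
  set μ : Measure ℝ := volume.restrict (Set.Ioc 0 b) with hμ
  haveI : IsFiniteMeasure μ := by
    constructor
    rw [hμ, Measure.restrict_apply_univ, Real.volume_Ioc]
    exact ENNReal.ofReal_lt_top
  set F : ℝ → ℝ → ℝ := fun s r => if s < r then g s * φ r else 0 with hF
  have hFm : Measurable (Function.uncurry F) := by
    have : Function.uncurry F = fun p : ℝ × ℝ =>
        Set.indicator {q : ℝ × ℝ | q.1 < q.2} (fun q => g q.1 * φ q.2) p := by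
      ext p
      simp only [Function.uncurry, hF, Set.indicator, Set.mem_setOf_eq]
    rw [this]
    exact Measurable.indicator ((hgm.comp measurable_fst).mul (hφm.comp measurable_snd))
      (measurableSet_lt measurable_fst measurable_snd)
  have hFint : Integrable (Function.uncurry F) (μ.prod μ) := by
    refine Integrable.mono' (integrable_const (Mg * Mφ)) hFm.aestronglyMeasurable ?_
    rw [hμ, Measure.prod_restrict]
    refine (ae_restrict_iff' (measurableSet_Ioc.prod measurableSet_Ioc)).2 ?_
    filter_upwards with p hp
    obtain ⟨hp1, hp2⟩ := hp
    simp only [Function.uncurry, hF]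
    split_ifs
    · rw [Real.norm_eq_abs, abs_mul]
      exact mul_le_mul (hMg _ ⟨le_of_lt hp1.1, hp1.2⟩) (hMφ _ ⟨le_of_lt hp2.1, hp2.2⟩)
        (abs_nonneg _) hMg0
    · simp [mul_nonneg hMg0 hMφ0]
  have hL : (∫ s, (∫ r, F s r ∂μ) ∂μ) = ∫ s in (0:ℝ)..b, g s * (∫ r in s..b, φ r) := by
    rw [intervalIntegral.integral_of_le hb, ← hμ]
    refine integral_congr_ae ?_
    simp only [hμ]
    filter_upwards [ae_restrict_mem measurableSet_Ioc] with s hs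
    have h1 : ∀ r, F s r = Set.indicator (Set.Ioi s) (fun r => g s * φ r) r := by
      intro r
      simp only [hF, Set.indicator, Set.mem_Ioi]
    simp_rw [h1]
    rw [MeasureTheory.integral_indicator measurableSet_Ioi, Measure.restrict_restrict measurableSet_Ioi]
    have h2 : Set.Ioi s ∩ Set.Ioc 0 b = Set.Ioc s b := by
      ext r
      simp only [Set.mem_inter_iff, Set.mem_Ioi, Set.mem_Ioc]
      constructor
      · rintro ⟨h, _, h3⟩; exact ⟨h, h3⟩
      · rintro ⟨h, h3⟩; exact ⟨h, lt_trans hs.1 h, h3⟩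
    rw [h2, MeasureTheory.integral_const_mul, intervalIntegral.integral_of_le hs.2]
  have hR : (∫ r, (∫ s, F s r ∂μ) ∂μ) = ∫ r in (0:ℝ)..b, (∫ s in (0:ℝ)..r, g s) * φ r := by
    rw [intervalIntegral.integral_of_le hb, ← hμ]
    refine integral_congr_ae ?_
    simp only [hμ]
    filter_upwards [ae_restrict_mem measurableSet_Ioc] with r hr
    have h1 : ∀ s, F s r = Set.indicator (Set.Iio r) (fun s => g s * φ r) s := by
      intro s
      simp only [hF, Set.indicator, Set.mem_Iio]
    simp_rw [h1]
    rw [MeasureTheory.integral_indicator measurableSet_Iio,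
      Measure.restrict_restrict measurableSet_Iio]
    have h2 : Set.Iio r ∩ Set.Ioc 0 b = Set.Ioo 0 r := by
      ext s
      simp only [Set.mem_inter_iff, Set.mem_Iio, Set.mem_Ioc, Set.mem_Ioo]
      constructor
      · rintro ⟨h, h3, _⟩; exact ⟨h3, h⟩
      · rintro ⟨h3, h⟩; exact ⟨h, h3, le_trans (le_of_lt h) hr.2⟩
    rw [h2, MeasureTheory.integral_mul_const, intervalIntegral.integral_of_le (le_of_lt hr.1),
      MeasureTheory.integral_Ioc_eq_integral_Ioo]
  rw [← hL, ← hR]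
  exact integral_integral_swap hFint


-- majorant integrability
lemma maj_int (t a b : ℝ) (r : ℝ) (hr : (-1:ℝ) < r) :
    IntervalIntegrable (fun s => (t - s) ^ r) volume a b := by
  have h := (intervalIntegral.intervalIntegrable_rpow' (a := t - a) (b := t - b) hr).comp_sub_left t
  simpa using h

lemma kernel_meas (t c ε y : ℝ) (hε : ε ≠ 0) (σ : ℝ → ℝ → ℝ) (σbar : ℝ → ℝ)
    (hmeas : Measurable (Function.uncurry σ)) (hbarmeas : Measurable σbar) :
    Measurable (fun s => (2 * Real.sqrt (π * (t - s)))⁻¹ * Real.exp (-c ^ 2 / (4 * (t - s))) *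
      (σ (s / ε) y - σbar y)) := by
  have h1 : Measurable (fun s : ℝ => t - s) := measurable_const.sub measurable_id
  have h2 : Measurable (fun s : ℝ => (2 * Real.sqrt (π * (t - s)))⁻¹) :=
    ((Real.continuous_sqrt.measurable.comp (h1.const_mul π)).const_mul 2).inv
  have h3 : Measurable (fun s : ℝ => Real.exp (-c ^ 2 / (4 * (t - s)))) :=
    (Real.continuous_exp.measurable.comp (measurable_const.div (h1.const_mul 4)))
  have h4 : Measurable (fun s : ℝ => σ (s / ε) y) := by
    have : (fun s : ℝ => σ (s / ε) y) =
        (Function.uncurry σ) ∘ (fun s : ℝ => (s / ε, y)) := rfl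
    rw [this]
    exact hmeas.comp ((measurable_id.div_const ε).prodMk measurable_const)
  exact (h2.mul h3).mul (h4.sub measurable_const)

lemma pointwise_bound (t c CH' : ℝ) (s : ℝ) (hs : s ≤ t) (h : ℝ) (hch : |h| ≤ CH') :
    |(2 * Real.sqrt (π * (t - s)))⁻¹ * Real.exp (-c ^ 2 / (4 * (t - s))) * h| ≤
      CH' * ((2 * Real.sqrt π)⁻¹ * (t - s) ^ (-(1:ℝ)/2)) := by
  have hu : 0 ≤ t - s := by linarith
  have hCH' : 0 ≤ CH' := le_trans (abs_nonneg _) hch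
  have hexp : Real.exp (-c ^ 2 / (4 * (t - s))) ≤ 1 := by
    rw [Real.exp_le_one_iff]
    rw [neg_div]
    simp only [neg_nonpos]
    positivity
  have hker : (2 * Real.sqrt (π * (t - s)))⁻¹ = (2 * Real.sqrt π)⁻¹ * (t - s) ^ (-(1:ℝ)/2) := by
    rw [Real.sqrt_mul Real.pi_nonneg, show (-(1:ℝ)/2) = -(1/2 : ℝ) by norm_num,
      Real.rpow_neg hu, ← Real.sqrt_eq_rpow]
    rw [mul_inv, mul_inv]
    ring
  rw [abs_mul, abs_mul]
  rw [abs_of_nonneg (by positivity : (0:ℝ) ≤ (2 * Real.sqrt (π * (t - s)))⁻¹),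
    abs_of_nonneg (Real.exp_pos _).le, hker]
  calc (2 * Real.sqrt π)⁻¹ * (t - s) ^ (-(1:ℝ)/2) * Real.exp (-c ^ 2 / (4 * (t - s))) * |h|
      ≤ (2 * Real.sqrt π)⁻¹ * (t - s) ^ (-(1:ℝ)/2) * 1 * CH' := by
        apply mul_le_mul (by
          apply mul_le_mul_of_nonneg_left hexp
          positivity) hch (abs_nonneg _)
        positivity
    _ = CH' * ((2 * Real.sqrt π)⁻¹ * (t - s) ^ (-(1:ℝ)/2)) := by ring

lemma kernel_int (t c ε y CH : ℝ) (hε : 0 < ε) (σ : ℝ → ℝ → ℝ) (σbar : ℝ → ℝ)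
    (hmeas : Measurable (Function.uncurry σ)) (hbarmeas : Measurable σbar)
    (hH : ∀ s : ℝ, 0 ≤ s → |σ s y - σbar y| ≤ CH)
    (a b : ℝ) (ha : 0 ≤ a) (hab : a ≤ b) (hbt : b ≤ t) :
    IntervalIntegrable (fun s => (2 * Real.sqrt (π * (t - s)))⁻¹ *
      Real.exp (-c ^ 2 / (4 * (t - s))) * (σ (s / ε) y - σbar y)) volume a b := by
  have hmaj : IntervalIntegrable (fun s => CH * ((2 * Real.sqrt π)⁻¹ * (t - s) ^ (-(1:ℝ)/2)))
      volume a b := by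
    have := (maj_int t a b (-(1:ℝ)/2) (by norm_num)).const_mul ((2 * Real.sqrt π)⁻¹)
    simpa [mul_assoc, mul_comm, mul_left_comm] using this.const_mul CH
  rw [intervalIntegrable_iff_integrableOn_Ioc_of_le hab]
  refine Integrable.mono' hmaj.1
    ((kernel_meas t c ε y hε.ne' σ σbar hmeas hbarmeas).aestronglyMeasurable) ?_
  filter_upwards [ae_restrict_mem measurableSet_Ioc] with s hsm
  rw [Real.norm_eq_abs]
  refine pointwise_bound t c CH s (le_trans hsm.2 hbt) _ ?_
  exact hH _ (div_nonneg (le_trans ha hsm.1.le) hε.le)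

lemma tail_bound (t c ε y CH : ℝ) (hε : 0 < ε) (σ : ℝ → ℝ → ℝ) (σbar : ℝ → ℝ)
    (hmeas : Measurable (Function.uncurry σ)) (hbarmeas : Measurable σbar)
    (hH : ∀ s : ℝ, 0 ≤ s → |σ s y - σbar y| ≤ CH)
    (a b : ℝ) (ha : 0 ≤ a) (hab : a ≤ b) (hbt : b ≤ t) :
    |∫ s in a..b, (2 * Real.sqrt (π * (t - s)))⁻¹ *
      Real.exp (-c ^ 2 / (4 * (t - s))) * (σ (s / ε) y - σbar y)| ≤
      CH / Real.sqrt π * Real.sqrt (b - a) := by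
  have hCH : 0 ≤ CH := le_trans (abs_nonneg _) (hH 0 le_rfl)
  have hint := kernel_int t c ε y CH hε σ σbar hmeas hbarmeas hH a b ha hab hbt
  have hmaj : IntervalIntegrable (fun s => CH * ((2 * Real.sqrt π)⁻¹ * (t - s) ^ (-(1:ℝ)/2)))
      volume a b := by
    have := (maj_int t a b (-(1:ℝ)/2) (by norm_num)).const_mul ((2 * Real.sqrt π)⁻¹)
    simpa [mul_assoc, mul_comm, mul_left_comm] using this.const_mul CH
  calc |∫ s in a..b, (2 * Real.sqrt (π * (t - s)))⁻¹ *
        Real.exp (-c ^ 2 / (4 * (t - s))) * (σ (s / ε) y - σbar y)|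
      ≤ ∫ s in a..b, |(2 * Real.sqrt (π * (t - s)))⁻¹ *
        Real.exp (-c ^ 2 / (4 * (t - s))) * (σ (s / ε) y - σbar y)| := by
        exact intervalIntegral.abs_integral_le_integral_abs hab
    _ ≤ ∫ s in a..b, CH * ((2 * Real.sqrt π)⁻¹ * (t - s) ^ (-(1:ℝ)/2)) := by
        refine intervalIntegral.integral_mono_on hab hint.abs hmaj ?_
        intro s hsm
        exact pointwise_bound t c CH s (le_trans hsm.2 hbt) _
          (hH _ (div_nonneg (le_trans ha hsm.1) hε.le))
    _ = CH * ((2 * Real.sqrt π)⁻¹ * ∫ s in a..b, (t - s) ^ (-(1:ℝ)/2)) := by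
        rw [intervalIntegral.integral_const_mul, intervalIntegral.integral_const_mul]
    _ ≤ CH / Real.sqrt π * Real.sqrt (b - a) := by
        have hcomp : (∫ s in a..b, (t - s) ^ (-(1:ℝ)/2)) =
            ∫ x in (t-b)..(t-a), x ^ (-(1:ℝ)/2) := by
          rw [← intervalIntegral.integral_comp_sub_left (fun x => x ^ (-(1:ℝ)/2)) t]
        rw [hcomp, integral_rpow (Or.inl (by norm_num))]
        have h1 : (-(1:ℝ)/2 + 1) = 1/2 := by norm_num
        rw [h1]
        have e1 : (t - a) ^ (1/2 : ℝ) = Real.sqrt (t - a) := (Real.sqrt_eq_rpow _).symm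
        have e2 : (t - b) ^ (1/2 : ℝ) = Real.sqrt (t - b) := (Real.sqrt_eq_rpow _).symm
        rw [e1, e2]
        have hsub : Real.sqrt (t - a) - Real.sqrt (t - b) ≤ Real.sqrt (b - a) := by
          have h2 : Real.sqrt (t - a) ≤ Real.sqrt (t - b) + Real.sqrt (b - a) := by
            have ht1 : (0:ℝ) ≤ t - b := by linarith
            have ht2 : (0:ℝ) ≤ b - a := by linarith
            have ht3 : (0:ℝ) ≤ t - a := by linarith
            nlinarith [Real.sq_sqrt ht1, Real.sq_sqrt ht2, Real.sq_sqrt ht3,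
              Real.sqrt_nonneg (t-b), Real.sqrt_nonneg (b-a), Real.sqrt_nonneg (t-a),
              mul_nonneg (Real.sqrt_nonneg (t-b)) (Real.sqrt_nonneg (b-a))]
          linarith
        have hπ : 0 < Real.sqrt π := Real.sqrt_pos.2 Real.pi_pos
        rw [div_eq_mul_inv]
        calc CH * ((2 * Real.sqrt π)⁻¹ * ((Real.sqrt (t-a) - Real.sqrt (t-b)) / (1/2)))
            = CH * (Real.sqrt π)⁻¹ * (Real.sqrt (t-a) - Real.sqrt (t-b)) := by
              field_simp
          _ ≤ CH * (Real.sqrt π)⁻¹ * Real.sqrt (b - a) := by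
              apply mul_le_mul_of_nonneg_left hsub
              positivity


lemma kernel_hasDerivAt (t c r : ℝ) (hr : r < t) :
    HasDerivAt (fun s => (2 * Real.sqrt (π * (t - s)))⁻¹ * Real.exp (-c ^ 2 / (4 * (t - s))))
      (Real.exp (-c ^ 2 / (4 * (t - r))) / (4 * Real.sqrt π * Real.sqrt (t - r) ^ 3)
        - c ^ 2 * Real.exp (-c ^ 2 / (4 * (t - r))) / (8 * Real.sqrt π * Real.sqrt (t - r) ^ 5))
      r := by
  have hu : 0 < t - r := by linarith
  have h1 : HasDerivAt (fun s : ℝ => t - s) (-1) r := by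
    simpa using (hasDerivAt_id r).const_sub t
  have h2 : HasDerivAt (fun s : ℝ => π * (t - s)) (π * -1) r := h1.const_mul π
  have hπu : (0:ℝ) < π * (t - r) := by positivity
  have h3 : HasDerivAt (fun s : ℝ => Real.sqrt (π * (t - s)))
      (1 / (2 * Real.sqrt (π * (t - r))) * (π * -1)) r :=
    (Real.hasDerivAt_sqrt hπu.ne').comp r h2
  have h4 : HasDerivAt (fun s : ℝ => 2 * Real.sqrt (π * (t - s)))
      (2 * (1 / (2 * Real.sqrt (π * (t - r))) * (π * -1))) r := h3.const_mul 2
  have hsq : (0:ℝ) < Real.sqrt (π * (t - r)) := Real.sqrt_pos.2 hπu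
  have h5 := h4.inv (by positivity : (2 * Real.sqrt (π * (t - r))) ≠ 0)
  have hden : HasDerivAt (fun s : ℝ => 4 * (t - s)) (4 * -1) r := h1.const_mul 4
  have h6 : HasDerivAt (fun s : ℝ => -c ^ 2 / (4 * (t - s)))
      ((0 * (4 * (t - r)) - -c ^ 2 * (4 * -1)) / (4 * (t - r)) ^ 2) r :=
    (hasDerivAt_const r (-c ^ 2)).div hden (by positivity)
  have h7 := h6.exp
  have h8 := h5.mul h7
  refine h8.congr_deriv ?_
  simp only [Pi.inv_apply]
  have hS : (0:ℝ) < Real.sqrt (t - r) := Real.sqrt_pos.2 hu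
  have hS2 : Real.sqrt (t - r) ^ 2 = t - r := Real.sq_sqrt hu.le
  have hPS : Real.sqrt (π * (t - r)) = Real.sqrt π * Real.sqrt (t - r) :=
    Real.sqrt_mul Real.pi_nonneg _
  have hπ : (0:ℝ) < Real.sqrt π := Real.sqrt_pos.2 Real.pi_pos
  have hπ2 : Real.sqrt π ^ 2 = π := Real.sq_sqrt Real.pi_pos.le
  rw [hPS]
  set S := Real.sqrt (t - r) with hSdef
  set P := Real.sqrt π with hPdef
  rw [← hS2, ← hπ2]
  have hS' : S ≠ 0 := ne_of_gt hS
  have hP' : P ≠ 0 := ne_of_gt hπ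
  field_simp
  ring

lemma V_bound (t c r : ℝ) (hr : r < t) :
    |Real.exp (-c ^ 2 / (4 * (t - r))) / (4 * Real.sqrt π * Real.sqrt (t - r) ^ 3)
      - c ^ 2 * Real.exp (-c ^ 2 / (4 * (t - r))) / (8 * Real.sqrt π * Real.sqrt (t - r) ^ 5)|
      ≤ (Real.sqrt π * Real.sqrt (t - r) ^ 3)⁻¹ := by
  rw [neg_div]
  have hu : 0 < t - r := by linarith
  have hS : (0:ℝ) < Real.sqrt (t - r) := Real.sqrt_pos.2 hu
  have hS2 : Real.sqrt (t - r) ^ 2 = t - r := Real.sq_sqrt hu.le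
  have hπ : (0:ℝ) < Real.sqrt π := Real.sqrt_pos.2 Real.pi_pos
  set q := c ^ 2 / (4 * (t - r)) with hq
  have hc2 : c ^ 2 = q * (4 * (t - r)) := by
    rw [hq]; field_simp
  have hq0 : 0 ≤ q := by rw [hq]; positivity
  clear_value q
  have hexp1 : Real.exp (-q) ≤ 1 := by
    rw [Real.exp_le_one_iff]; linarith
  have hqe : q * Real.exp (-q) ≤ 1 := by
    have h := Real.add_one_le_exp q
    have h2 : Real.exp (-q) = (Real.exp q)⁻¹ := by rw [Real.exp_neg]
    rw [h2]
    rw [mul_inv_le_iff₀ (Real.exp_pos q)]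
    linarith
  have hterm2 : c ^ 2 * Real.exp (-q) / (8 * Real.sqrt π * Real.sqrt (t - r) ^ 5)
      ≤ (2 * Real.sqrt π * Real.sqrt (t - r) ^ 3)⁻¹ := by
    rw [hc2]
    have : q * (4 * (t - r)) * Real.exp (-q) / (8 * Real.sqrt π * Real.sqrt (t - r) ^ 5)
        = (q * Real.exp (-q)) * (2 * Real.sqrt π * Real.sqrt (t - r) ^ 3)⁻¹ := by
      have h5 : Real.sqrt (t-r) ^ 5 = Real.sqrt (t-r) ^ 3 * (t - r) := by
        rw [show (5:ℕ) = 3 + 2 from rfl, pow_add, hS2]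
      rw [h5]
      field_simp
      ring
    rw [this]
    nth_rewrite 2 [← one_mul ((2 * Real.sqrt π * Real.sqrt (t - r) ^ 3)⁻¹)]
    apply mul_le_mul_of_nonneg_right hqe
    positivity
  have hterm1 : Real.exp (-q) / (4 * Real.sqrt π * Real.sqrt (t - r) ^ 3)
      ≤ (4 * Real.sqrt π * Real.sqrt (t - r) ^ 3)⁻¹ := by
    rw [div_le_iff₀ (by positivity)]
    rw [inv_mul_cancel₀ (by positivity : (4* Real.sqrt π * Real.sqrt (t - r) ^ 3) ≠ 0)]
    exact hexp1
  have h1 : |Real.exp (-q) / (4 * Real.sqrt π * Real.sqrt (t - r) ^ 3)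
      - c ^ 2 * Real.exp (-q) / (8 * Real.sqrt π * Real.sqrt (t - r) ^ 5)|
      ≤ (4 * Real.sqrt π * Real.sqrt (t - r) ^ 3)⁻¹ + (2 * Real.sqrt π * Real.sqrt (t - r) ^ 3)⁻¹ := by
    refine le_trans (abs_sub _ _) ?_
    gcongr
    · rw [abs_of_nonneg (by positivity)]; exact hterm1
    · rw [abs_of_nonneg (by positivity)]; exact hterm2
  refine le_trans h1 ?_
  rw [mul_inv, mul_inv, mul_inv, mul_inv, mul_inv]
  have hpos : 0 < (Real.sqrt π)⁻¹ * (Real.sqrt (t - r) ^ 3)⁻¹ := by positivity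
  nlinarith [hpos]



section
variable (t c ε y CH CG : ℝ) (σ : ℝ → ℝ → ℝ) (σbar : ℝ → ℝ)

-- continuity of V on Iio t
lemma V_contOn (t c : ℝ) :
    ContinuousOn (fun r => Real.exp (-c ^ 2 / (4 * (t - r))) / (4 * Real.sqrt π * Real.sqrt (t - r) ^ 3)
      - c ^ 2 * Real.exp (-c ^ 2 / (4 * (t - r))) / (8 * Real.sqrt π * Real.sqrt (t - r) ^ 5))
      (Set.Iio t) := by
  have hπ : (0:ℝ) < Real.sqrt π := Real.sqrt_pos.2 Real.pi_pos
  have hsub : ContinuousOn (fun r : ℝ => t - r) (Set.Iio t) :=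
    (continuous_const.sub continuous_id).continuousOn
  have hsqrt : ContinuousOn (fun r : ℝ => Real.sqrt (t - r)) (Set.Iio t) :=
    Real.continuous_sqrt.comp_continuousOn hsub
  have hSpos : ∀ r ∈ Set.Iio t, (0:ℝ) < Real.sqrt (t - r) := fun r hr =>
    Real.sqrt_pos.2 (by simp only [Set.mem_Iio] at hr; linarith)
  have hexp : ContinuousOn (fun r : ℝ => Real.exp (-c ^ 2 / (4 * (t - r)))) (Set.Iio t) := by
    apply Real.continuous_exp.comp_continuousOn
    apply ContinuousOn.div continuousOn_const (hsub.const_smul 4 |>.congr (fun x _ => by simp))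
    intro r hr
    simp only [Set.mem_Iio] at hr
    have : (0:ℝ) < t - r := by linarith
    positivity
  apply ContinuousOn.sub
  · apply hexp.div ((continuousOn_const.mul (hsqrt.pow 3)))
    intro r hr
    have := hSpos r hr
    exact mul_ne_zero (mul_ne_zero (by norm_num) hπ.ne') (pow_ne_zero _ this.ne')
  · apply ContinuousOn.div (continuousOn_const.mul hexp) ((continuousOn_const.mul (hsqrt.pow 5)))
    intro r hr
    have := hSpos r hr
    exact mul_ne_zero (mul_ne_zero (by norm_num) hπ.ne') (pow_ne_zero _ this.ne')

lemma V_meas (t c : ℝ) :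
    Measurable (fun r => Real.exp (-c ^ 2 / (4 * (t - r))) / (4 * Real.sqrt π * Real.sqrt (t - r) ^ 3)
      - c ^ 2 * Real.exp (-c ^ 2 / (4 * (t - r))) / (8 * Real.sqrt π * Real.sqrt (t - r) ^ 5)) := by
  have h1 : Measurable (fun r : ℝ => t - r) := measurable_const.sub measurable_id
  have hsqrt : Measurable (fun r : ℝ => Real.sqrt (t - r)) :=
    Real.continuous_sqrt.measurable.comp h1
  have hexp : Measurable (fun r : ℝ => Real.exp (-c ^ 2 / (4 * (t - r)))) :=
    Real.continuous_exp.measurable.comp (measurable_const.div (h1.const_mul 4))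
  exact (hexp.div ((hsqrt.pow_const 3).const_mul _)).sub
    ((hexp.const_mul _).div ((hsqrt.pow_const 5).const_mul _))

end

lemma M_int_value (t ε : ℝ) (hε : 0 < ε) (het : ε < t) :
    ∫ r in (0:ℝ)..(t-ε), (t - r) ^ (-(3:ℝ)/2) ≤ 2 / Real.sqrt ε := by
  have h1 : (∫ r in (0:ℝ)..(t-ε), (t - r) ^ (-(3:ℝ)/2)) =
      ∫ x in ε..t, x ^ (-(3:ℝ)/2) := by
    have := intervalIntegral.integral_comp_sub_left (a := (0:ℝ)) (b := t - ε)
      (fun x => x ^ (-(3:ℝ)/2)) t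
    simpa using this
  rw [h1, integral_rpow (Or.inr ⟨by norm_num, by
    rw [Set.uIcc_of_le het.le]
    intro h
    exact absurd h.1 (not_le.2 hε)⟩)]
  have h2 : (-(3:ℝ)/2 + 1) = -(1/2 : ℝ) := by norm_num
  rw [h2]
  have hε2 : ε ^ (-(1/2):ℝ) = (Real.sqrt ε)⁻¹ := by
    rw [Real.rpow_neg hε.le, ← Real.sqrt_eq_rpow]
  have ht2 : (0:ℝ) ≤ t ^ (-(1/2):ℝ) := Real.rpow_nonneg (by linarith) _
  have hεs : (0:ℝ) < Real.sqrt ε := Real.sqrt_pos.2 hε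
  rw [div_eq_mul_inv 2 (Real.sqrt ε)]
  calc (t ^ (-(1/2):ℝ) - ε ^ (-(1/2):ℝ)) / -(1/2)
      = 2 * (ε ^ (-(1/2):ℝ) - t ^ (-(1/2):ℝ)) := by ring
    _ ≤ 2 * ε ^ (-(1/2):ℝ) := by linarith
    _ = 2 * (Real.sqrt ε)⁻¹ := by rw [hε2]

lemma M_intble (t ε a b : ℝ) (hbt : b < t) (hab : a ≤ b) :
    IntervalIntegrable (fun r => (t - r) ^ (-(3:ℝ)/2)) volume a b := by
  apply ContinuousOn.intervalIntegrable
  apply ContinuousOn.rpow_const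
  · exact (continuous_const.sub continuous_id).continuousOn
  · intro r hr
    rw [Set.uIcc_of_le hab] at hr
    left
    have : (0:ℝ) < t - r := by
      have : r < t := lt_of_le_of_lt hr.2 hbt
      linarith
    exact this.ne'

/-- Inequality (11) of the paper: if `H(s,y) = σ(s,y) - σ̄(y)` and
`G(r,y) = ∫₀ʳ (σ(s,y) - σ̄(y)) ds` are bounded, then
`|∫₀ᵗ p(t-s, x-y)(σ(s/ε,y) - σ̄(y)) ds| ≤ C √ε`. -/
theorem averaged_integral_sqrt_eps_bound (T : ℝ) (hT : 0 < T)
    (σ : ℝ → ℝ → ℝ) (σbar : ℝ → ℝ)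
    (hmeas : Measurable (Function.uncurry σ)) (hbarmeas : Measurable σbar)
    (CH : ℝ) (hH : ∀ s : ℝ, 0 ≤ s → ∀ y, |σ s y - σbar y| ≤ CH)
    (CG : ℝ) (hG : ∀ r : ℝ, 0 ≤ r → ∀ y,
      |∫ s in (0:ℝ)..r, (σ s y - σbar y)| ≤ CG) :
    ∃ C : ℝ, ∀ (t x y ε : ℝ), 0 < t → t ≤ T → 0 < ε →
      |∫ s in (0:ℝ)..t,
          (2 * Real.sqrt (π * (t - s)))⁻¹ * Real.exp (-(x - y) ^ 2 / (4 * (t - s))) *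
            (σ (s / ε) y - σbar y)|
        ≤ C * Real.sqrt ε := by
  refine ⟨(5 * CG + 2 * CH) / (2 * Real.sqrt π), ?_⟩
  intro t x y ε ht htT hε
  have hπ : (0:ℝ) < Real.sqrt π := Real.sqrt_pos.2 Real.pi_pos
  have hCH0 : 0 ≤ CH := le_trans (abs_nonneg _) (hH 0 le_rfl 0)
  have hCG0 : 0 ≤ CG := le_trans (abs_nonneg _) (hG 0 le_rfl 0)
  have hHy : ∀ s : ℝ, 0 ≤ s → |σ s y - σbar y| ≤ CH := fun s hs => hH s hs y
  set c := x - y with hc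
  have hεs : (0:ℝ) < Real.sqrt ε := Real.sqrt_pos.2 hε
  have hCfin : CH / Real.sqrt π ≤ (5 * CG + 2 * CH) / (2 * Real.sqrt π) := by
    rw [div_le_div_iff₀ hπ (by positivity)]
    nlinarith
  rcases le_or_gt t ε with hte | het
  · have htail := tail_bound t c ε y CH hε σ σbar hmeas hbarmeas hHy 0 t le_rfl ht.le le_rfl
    rw [sub_zero] at htail
    refine le_trans htail (le_trans ?_ (mul_le_mul_of_nonneg_right hCfin hεs.le))
    exact mul_le_mul_of_nonneg_left (Real.sqrt_le_sqrt hte) (by positivity)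
  · -- main case : ε < t
    set b := t - ε with hbdef
    have hb0 : (0:ℝ) ≤ b := by rw [hbdef]; linarith
    have hbt : b < t := by rw [hbdef]; linarith
    have htb : t - b = ε := by rw [hbdef]; ring
    set Hf : ℝ → ℝ := fun s => σ (s / ε) y - σbar y with hHf
    set V : ℝ → ℝ := fun r =>
      Real.exp (-c ^ 2 / (4 * (t - r))) / (4 * Real.sqrt π * Real.sqrt (t - r) ^ 3)
        - c ^ 2 * Real.exp (-c ^ 2 / (4 * (t - r))) / (8 * Real.sqrt π * Real.sqrt (t - r) ^ 5)
      with hV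
    have hHfmeas : Measurable Hf := by
      rw [hHf]
      have : (fun s : ℝ => σ (s / ε) y) =
          (Function.uncurry σ) ∘ (fun s : ℝ => (s / ε, y)) := rfl
      exact ((this ▸ hmeas.comp ((measurable_id.div_const ε).prodMk measurable_const)).sub
        measurable_const)
    have hint1 := kernel_int t c ε y CH hε σ σbar hmeas hbarmeas hHy 0 b le_rfl hb0 hbt.le
    have hint2 := kernel_int t c ε y CH hε σ σbar hmeas hbarmeas hHy b t hb0 hbt.le le_rfl
    have hsplit := intervalIntegral.integral_add_adjacent_intervals hint1 hint2
    have htail := tail_bound t c ε y CH hε σ σbar hmeas hbarmeas hHy b t hb0 hbt.le le_rfl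
    rw [htb] at htail
    -- bound on the primitive A r = ∫ s in 0..r, Hf s
    have hA : ∀ r : ℝ, 0 ≤ r → |∫ s in (0:ℝ)..r, Hf s| ≤ ε * CG := by
      intro r hr
      have he : (∫ s in (0:ℝ)..r, Hf s) = ε • ∫ u in (0:ℝ)/ε..r/ε, (σ u y - σbar y) := by
        rw [hHf]
        exact intervalIntegral.integral_comp_div (fun u => σ u y - σbar y) hε.ne'
      rw [he, zero_div, smul_eq_mul, abs_mul, abs_of_pos hε]
      exact mul_le_mul_of_nonneg_left (hG (r/ε) (div_nonneg hr hε.le) y) hε.le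
    -- V bounds and regularity
    have hVcont : ContinuousOn V (Set.Iio t) := hV ▸ V_contOn t c
    have hVmeas : Measurable V := hV ▸ V_meas t c
    have hMv : ∀ r ∈ Set.Icc (0:ℝ) b, |V r| ≤ (Real.sqrt π * Real.sqrt ε ^ 3)⁻¹ := by
      intro r hr
      have hrt : r < t := lt_of_le_of_lt hr.2 hbt
      refine le_trans (V_bound t c r hrt) ?_
      have h1 : Real.sqrt ε ≤ Real.sqrt (t - r) := Real.sqrt_le_sqrt (by
        rw [hbdef] at hr; linarith [hr.2])
      have h2 : Real.sqrt ε ^ 3 ≤ Real.sqrt (t - r) ^ 3 := by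
        exact pow_le_pow_left₀ hεs.le h1 3
      apply inv_anti₀ (by positivity)
      exact mul_le_mul_of_nonneg_left h2 hπ.le
    have hVMvb : ∀ r ∈ Set.Icc (0:ℝ) b, |V r| ≤
        (Real.sqrt π)⁻¹ * (t - r) ^ (-(3:ℝ)/2) := by
      intro r hr
      have hrt : r < t := lt_of_le_of_lt hr.2 hbt
      have hu : (0:ℝ) < t - r := by linarith
      refine le_trans (V_bound t c r hrt) (le_of_eq ?_)
      have h3 : Real.sqrt (t - r) ^ 3 = (t - r) ^ ((3:ℝ)/2) := by
        rw [Real.sqrt_eq_rpow, ← Real.rpow_natCast ((t-r) ^ ((1:ℝ)/2)) 3,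
          ← Real.rpow_mul hu.le]
        norm_num
      rw [mul_inv, h3, ← Real.rpow_neg hu.le]
      norm_num
    -- interval integrability of Hf
    have hHfII : IntervalIntegrable Hf volume 0 b := by
      rw [intervalIntegrable_iff_integrableOn_Ioc_of_le hb0]
      refine Integrable.mono' (integrable_const CH) hHfmeas.aestronglyMeasurable ?_
      filter_upwards [ae_restrict_mem measurableSet_Ioc] with s hs
      rw [Real.norm_eq_abs, hHf]
      exact hHy _ (div_nonneg hs.1.le hε.le)
    -- the key decomposition
    set K : ℝ := (2 * Real.sqrt (π * (t - b)))⁻¹ * Real.exp (-c ^ 2 / (4 * (t - b))) with hK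
    have huIcc : Set.uIcc (0:ℝ) b = Set.Icc 0 b := Set.uIcc_of_le hb0
    have e1 : ∀ s ∈ Set.uIcc (0:ℝ) b,
        (2 * Real.sqrt (π * (t - s)))⁻¹ * Real.exp (-c ^ 2 / (4 * (t - s))) * Hf s
          = K * Hf s - Hf s * (∫ r in s..b, V r) := by
      intro s hs
      rw [huIcc] at hs
      have hVi : IntervalIntegrable V volume s b := by
        apply (hVcont.mono ?_).intervalIntegrable
        rw [Set.uIcc_of_le hs.2]
        intro r hr
        exact lt_of_le_of_lt hr.2 hbt
      have hder : ∀ r ∈ Set.uIcc s b,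
          HasDerivAt (fun z => (2 * Real.sqrt (π * (t - z)))⁻¹ *
            Real.exp (-c ^ 2 / (4 * (t - z)))) (V r) r := by
        intro r hr
        rw [Set.uIcc_of_le hs.2] at hr
        exact hV ▸ kernel_hasDerivAt t c r (lt_of_le_of_lt hr.2 hbt)
      have hFTC := intervalIntegral.integral_eq_sub_of_hasDerivAt hder hVi
      rw [hFTC, hK]
      ring
    have hswap := swap_triangle b hb0 Hf V hHfmeas hVmeas CH ((Real.sqrt π * Real.sqrt ε ^ 3)⁻¹)
      (fun s hs => hHf ▸ hHy _ (div_nonneg hs.1 hε.le)) hMv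
    have hsubInt : IntervalIntegrable (fun s => Hf s * (∫ r in s..b, V r)) volume 0 b := by
      refine ((hHfII.const_mul K).sub hint1).congr_ae ?_
      rw [Set.uIoc_of_le hb0]
      filter_upwards [ae_restrict_mem measurableSet_Ioc] with s hs
      have := e1 s (by rw [huIcc]; exact ⟨hs.1.le, hs.2⟩)
      linarith [this]
    have hkey : (∫ s in (0:ℝ)..b,
        (2 * Real.sqrt (π * (t - s)))⁻¹ * Real.exp (-c ^ 2 / (4 * (t - s))) * Hf s)
          = K * (∫ s in (0:ℝ)..b, Hf s)
            - ∫ r in (0:ℝ)..b, (∫ s in (0:ℝ)..r, Hf s) * V r := by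
      rw [intervalIntegral.integral_congr e1,
        intervalIntegral.integral_sub (hHfII.const_mul K) hsubInt,
        intervalIntegral.integral_const_mul, hswap]
    -- bound on the V-part
    have hAVcont : ContinuousOn (fun r => (∫ s in (0:ℝ)..r, Hf s) * V r) (Set.Icc 0 b) := by
      apply ContinuousOn.mul
      · have := intervalIntegral.continuousOn_primitive_interval
          (a := (0:ℝ)) (b := b) (f := Hf) (μ := volume) ?_
        · rwa [huIcc] at this
        · rw [huIcc]
          refine Integrable.mono' (integrable_const CH) hHfmeas.aestronglyMeasurable ?_
          filter_upwards [ae_restrict_mem measurableSet_Icc] with s hs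
          rw [Real.norm_eq_abs, hHf]
          exact hHy _ (div_nonneg hs.1 hε.le)
      · exact hVcont.mono (fun r hr => lt_of_le_of_lt hr.2 hbt)
    have hAVint : IntervalIntegrable (fun r => (∫ s in (0:ℝ)..r, Hf s) * V r) volume 0 b := by
      apply ContinuousOn.intervalIntegrable
      rwa [huIcc]
    have hMmaj : IntervalIntegrable
        (fun r => (ε * CG) * ((Real.sqrt π)⁻¹ * (t - r) ^ (-(3:ℝ)/2))) volume 0 b :=
      ((M_intble t ε 0 b hbt hb0).const_mul _).const_mul _
    have hVpart : |∫ r in (0:ℝ)..b, (∫ s in (0:ℝ)..r, Hf s) * V r| ≤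
        ε * CG * ((Real.sqrt π)⁻¹ * (2 / Real.sqrt ε)) := by
      calc |∫ r in (0:ℝ)..b, (∫ s in (0:ℝ)..r, Hf s) * V r|
          ≤ ∫ r in (0:ℝ)..b, |(∫ s in (0:ℝ)..r, Hf s) * V r| :=
            intervalIntegral.abs_integral_le_integral_abs hb0
        _ ≤ ∫ r in (0:ℝ)..b, (ε * CG) * ((Real.sqrt π)⁻¹ * (t - r) ^ (-(3:ℝ)/2)) := by
            refine intervalIntegral.integral_mono_on hb0 hAVint.abs hMmaj ?_
            intro r hr
            rw [abs_mul]
            exact mul_le_mul (hA r hr.1) (hVMvb r hr) (abs_nonneg _)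
              (mul_nonneg hε.le hCG0)
        _ = (ε * CG) * ((Real.sqrt π)⁻¹ * ∫ r in (0:ℝ)..b, (t - r) ^ (-(3:ℝ)/2)) := by
            rw [intervalIntegral.integral_const_mul, intervalIntegral.integral_const_mul]
        _ ≤ ε * CG * ((Real.sqrt π)⁻¹ * (2 / Real.sqrt ε)) := by
            have := M_int_value t ε hε het
            rw [← hbdef] at this
            have h0 : (0:ℝ) ≤ ∫ r in (0:ℝ)..b, (t - r) ^ (-(3:ℝ)/2) := by
              apply intervalIntegral.integral_nonneg hb0
              intro u hu
              have h1 : (0:ℝ) < t - u := by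
                have := hu.2
                rw [hbdef] at this
                linarith
              positivity
            apply mul_le_mul_of_nonneg_left _ (mul_nonneg hε.le hCG0)
            exact mul_le_mul_of_nonneg_left this (by positivity)
    -- bound on K
    have hKb : |K| ≤ (2 * Real.sqrt π * Real.sqrt ε)⁻¹ := by
      rw [hK, htb, abs_mul]
      rw [abs_of_nonneg (by positivity : (0:ℝ) ≤ (2 * Real.sqrt (π * ε))⁻¹),
        abs_of_nonneg (Real.exp_pos _).le]
      have hexp : Real.exp (-c ^ 2 / (4 * ε)) ≤ 1 := by
        rw [Real.exp_le_one_iff, neg_div]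
        simp only [neg_nonpos]
        positivity
      have : (2 * Real.sqrt (π * ε))⁻¹ = (2 * Real.sqrt π * Real.sqrt ε)⁻¹ := by
        rw [Real.sqrt_mul Real.pi_nonneg, mul_assoc]
      rw [this]
      nth_rewrite 2 [← mul_one ((2 * Real.sqrt π * Real.sqrt ε)⁻¹)]
      exact mul_le_mul_of_nonneg_left hexp (by positivity)
    -- assemble
    have hmain : |∫ s in (0:ℝ)..b,
        (2 * Real.sqrt (π * (t - s)))⁻¹ * Real.exp (-c ^ 2 / (4 * (t - s))) * Hf s| ≤
        (2 * Real.sqrt π * Real.sqrt ε)⁻¹ * (ε * CG)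
          + ε * CG * ((Real.sqrt π)⁻¹ * (2 / Real.sqrt ε)) := by
      rw [hkey]
      refine le_trans (abs_sub _ _) (add_le_add ?_ hVpart)
      rw [abs_mul]
      exact mul_le_mul hKb (hA b hb0) (abs_nonneg _) (by positivity)
    rw [← hsplit]
    refine le_trans (abs_add_le _ _) ?_
    have hfinal : (2 * Real.sqrt π * Real.sqrt ε)⁻¹ * (ε * CG)
        + ε * CG * ((Real.sqrt π)⁻¹ * (2 / Real.sqrt ε))
        + CH / Real.sqrt π * Real.sqrt ε
        ≤ (5 * CG + 2 * CH) / (2 * Real.sqrt π) * Real.sqrt ε := by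
      set sε := Real.sqrt ε with hsεdef
      rw [show ε = sε * sε from (Real.mul_self_sqrt hε.le).symm]
      apply le_of_eq
      field_simp
      ring
    refine le_trans (add_le_add hmain htail) hfinal
end
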